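/- In the Milnor-Witt K-theory ring K^MW_*(E), for any units a, b ∈ E^×, one has [a][b] = ε·[b][a], where ε = −⟨−1⟩ = −(1 + η[−1]). In particular degree-1 symbols ε-commute. -/

import Mathlib

/-!  Milnor-Witt K-theory of a field `E`, presented by generators `[a]` (degree 1, `a ∈ Eˣ`)
and `η` (degree −1), with relations
`[a][1−a] = 0` (for `a ≠ 1`), `[ab] = [a] + [b] + η[a][b]`, `η[a] = [a]η`, `η(η[−1]+2) = 0`. -/

/-- Generators of Milnor-Witt K-theory: symbols `[a]` for units `a`, and `η`. -/
inductive MWGen (E : Type) [Field E] : Type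
  | sym : Eˣ → MWGen E
  | eta : MWGen E

namespace MWK

variable (E : Type) [Field E]

/-- The element `[a]` in the free algebra. -/
noncomputable def S (a : Eˣ) : FreeAlgebra ℤ (MWGen E) := FreeAlgebra.ι ℤ (MWGen.sym a)

/-- The element `η` in the free algebra. -/
noncomputable def H : FreeAlgebra ℤ (MWGen E) := FreeAlgebra.ι ℤ MWGen.eta

/-- The defining relations of Milnor-Witt K-theory. -/
inductive Rel : FreeAlgebra ℤ (MWGen E) → FreeAlgebra ℤ (MWGen E) → Prop
  | steinberg (a : Eˣ) (ha : (a : E) ≠ 1) :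
      Rel (S E a * S E (Units.mk0 (1 - (a : E)) (sub_ne_zero_of_ne (Ne.symm ha)))) 0
  | mul_symbol (a b : Eˣ) : Rel (S E (a * b)) (S E a + S E b + H E * S E a * S E b)
  | eta_comm (a : Eˣ) : Rel (H E * S E a) (S E a * H E)
  | eta_hyp : Rel (H E * (H E * S E (-1) + 2)) 0

end MWK

/-- The Milnor-Witt K-theory ring `K^MW_*(E)` of a field `E`. -/
noncomputable def KMW (E : Type) [Field E] : Type := RingQuot (MWK.Rel E)

noncomputable instance (E : Type) [Field E] : Ring (KMW E) :=
  inferInstanceAs (Ring (RingQuot (MWK.Rel E)))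

namespace KMW

variable {E : Type} [Field E]

/-- The symbol `[a] ∈ K^MW_1(E)`. -/
noncomputable def sym (a : Eˣ) : KMW E := RingQuot.mkRingHom (MWK.Rel E) (MWK.S E a)

/-- The symbol `η ∈ K^MW_{-1}(E)`. -/
noncomputable def eta : KMW E := RingQuot.mkRingHom (MWK.Rel E) (MWK.H E)

/-- The quadratic form `⟨a⟩ = 1 + η[a] ∈ K^MW_0(E)`. -/
noncomputable def form (a : Eˣ) : KMW E := 1 + eta * sym a

/-- `ε = −⟨−1⟩`. -/
noncomputable def eps : KMW E := - form (-1)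

end KMW

namespace KMW

variable {E : Type} [Field E]

private lemma lcomm {R : Type*} [Ring R] {a b : R} (h : a * b = b * a) (c : R) :
    a * (b * c) = b * (a * c) := by rw [← mul_assoc, h, mul_assoc]

private lemma mk_rel {x y : FreeAlgebra ℤ (MWGen E)} (h : MWK.Rel E x y) :
    RingQuot.mkRingHom (MWK.Rel E) x = RingQuot.mkRingHom (MWK.Rel E) y :=
  RingQuot.mkRingHom_rel h

lemma mul_symbol (a b : Eˣ) : sym (a * b) = sym a + sym b + eta * sym a * sym b := by
  have h := mk_rel (MWK.Rel.mul_symbol a b)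
  simp only [map_add, map_mul] at h
  exact h

lemma steinberg (a : Eˣ) (ha : (a : E) ≠ 1) :
    sym a * sym (Units.mk0 (1 - (a : E)) (sub_ne_zero_of_ne (Ne.symm ha))) = 0 := by
  have h := mk_rel (MWK.Rel.steinberg a ha)
  simp only [map_mul, map_zero] at h
  exact h

lemma eta_comm (a : Eˣ) : eta * sym a = sym a * eta := by
  have h := mk_rel (MWK.Rel.eta_comm a)
  simp only [map_mul] at h
  exact h

lemma eta_hyp : eta * (eta * sym (-1 : Eˣ) + 2) = (0 : KMW E) := by
  have h := mk_rel (MWK.Rel.eta_hyp (E := E))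
  simp only [map_add, map_mul, map_ofNat, map_zero] at h
  exact h

lemma central (c : KMW E) (hs : ∀ a : Eˣ, c * sym a = sym a * c)
    (he : c * eta = eta * c) (x : KMW E) : c * x = x * c := by
  obtain ⟨y, rfl⟩ := RingQuot.mkRingHom_surjective (MWK.Rel E) x
  induction y with
  | grade0 r =>
      rw [show (algebraMap ℤ (FreeAlgebra ℤ (MWGen E)) r) = (r : FreeAlgebra ℤ (MWGen E)) by
        simp, map_intCast]
      exact (Int.cast_commute r c).symm.eq
  | grade1 g => cases g with
      | sym a => exact hs a
      | eta => exact he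
  | mul x y hx hy => rw [map_mul]; exact (show ∀ X Y : KMW E, c * X = X * c → c * Y = Y * c →
      c * (X * Y) = X * Y * c by intro X Y hx hy
                                 rw [← mul_assoc, hx, mul_assoc, hy, mul_assoc]) _ _ hx hy
  | add x y hx hy => rw [map_add]; exact (show ∀ X Y : KMW E, c * X = X * c → c * Y = Y * c →
      c * (X + Y) = (X + Y) * c by intro X Y hx hy; rw [mul_add, hx, hy, add_mul]) _ _ hx hy

lemma eta_central (x : KMW E) : eta * x = x * eta :=
  central _ (fun a => eta_comm a) rfl x

/-- move `eta` to the front -/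
lemma eta_move (x y : KMW E) : x * (eta * y) = eta * (x * y) :=
  lcomm (eta_central x).symm y

lemma eta_ss (a b : Eˣ) : eta * sym a * sym b = eta * sym b * sym a := by
  have h1 := mul_symbol a b
  have h2 := mul_symbol b a
  rw [mul_comm b a, h1, add_comm (sym b) (sym a)] at h2
  exact add_left_cancel h2

lemma form_central (u : Eˣ) (x : KMW E) : form u * x = x * form u := by
  refine central _ (fun b => ?_) ?_ x
  · show (1 + eta * sym u) * sym b = sym b * (1 + eta * sym u)
    rw [add_mul, mul_add, one_mul, mul_one]
    congr 1
    rw [eta_ss, ← mul_assoc, ← eta_comm, mul_assoc]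
  · show (1 + eta * sym u) * eta = eta * (1 + eta * sym u)
    rw [add_mul, mul_add, one_mul, mul_one, mul_assoc, ← eta_comm]

lemma form_move (u : Eˣ) (x y : KMW E) : x * (form u * y) = form u * (x * y) :=
  lcomm (form_central u x).symm y

lemma eta_sq : eta * (eta * sym (-1 : Eˣ)) = -(2 * eta : KMW E) := by
  have h := eta_hyp (E := E)
  rw [mul_add] at h
  rw [show eta * (2 : KMW E) = 2 * eta by rw [mul_two, two_mul]] at h
  exact eq_neg_of_add_eq_zero_left h

lemma eta_sym_one : eta * sym (1 : Eˣ) = (0 : KMW E) := by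
  have h := mul_symbol (-1 : Eˣ) (-1)
  rw [neg_mul_neg, one_mul] at h
  calc eta * sym (1 : Eˣ)
      = eta * (sym (-1 : Eˣ) + sym (-1) + eta * sym (-1) * sym (-1)) := by rw [← h]
    _ = eta * sym (-1 : Eˣ) + eta * sym (-1)
        + (eta * (eta * sym (-1))) * sym (-1) := by
          rw [mul_add, mul_add, ← mul_assoc eta (eta * sym (-1 : Eˣ)) (sym (-1))]
    _ = eta * sym (-1 : Eˣ) + eta * sym (-1) + (-(2 * eta)) * sym (-1) := by rw [eta_sq]
    _ = 0 := by noncomm_ring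

lemma sym_one : sym (1 : Eˣ) = (0 : KMW E) := by
  have h := mul_symbol (1 : Eˣ) 1
  rw [one_mul, eta_sym_one, zero_mul, add_zero] at h
  exact add_eq_right.mp h.symm

lemma form_mul (u v : Eˣ) : form (u * v) = form u * form v := by
  show 1 + eta * sym (u * v) = (1 + eta * sym u) * (1 + eta * sym v)
  rw [mul_symbol]
  have hexp : (1 + eta * sym u) * (1 + eta * sym v)
      = 1 + eta * sym u + eta * sym v + eta * sym u * (eta * sym v) := by noncomm_ring
  have haux : eta * sym u * (eta * sym v) = eta * (eta * sym u * sym v) := by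
    rw [mul_assoc eta (sym u), eta_move (sym u), ← mul_assoc eta (sym u) (sym v)]
  rw [hexp, haux]
  noncomm_ring

lemma form_one : form (1 : Eˣ) = (1 : KMW E) := by
  show 1 + eta * sym (1 : Eˣ) = 1
  rw [eta_sym_one, add_zero]

lemma form_cancel (u : Eˣ) {x y : KMW E} (h : form u * x = form u * y) : x = y := by
  have h2 := congrArg (fun z => form u⁻¹ * z) h
  simp only [← mul_assoc, ← form_mul] at h2
  rw [inv_mul_cancel, form_one, one_mul, one_mul] at h2
  exact h2

lemma inv_key (y : Eˣ) : form y * sym y⁻¹ = -sym y := by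
  have h := mul_symbol y y⁻¹
  rw [mul_inv_cancel, sym_one, add_assoc] at h
  show (1 + eta * sym y) * sym y⁻¹ = -sym y
  rw [add_mul, one_mul]
  exact eq_neg_of_add_eq_zero_right h.symm

lemma sym_mul_neg (a : Eˣ) : sym a * sym (-a) = (0 : KMW E) := by
  by_cases hq : a = 1
  · rw [hq, sym_one, zero_mul]
  · have ha : (a : E) ≠ 1 := fun h => hq (Units.ext h)
    have hainv : ((a⁻¹ : Eˣ) : E) ≠ 1 := fun h => by
      rw [Units.val_inv_eq_inv_val, inv_eq_one] at h; exact ha h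
    set x : Eˣ := Units.mk0 (1 - (a : E)) (sub_ne_zero_of_ne (Ne.symm ha)) with hxdef
    set y : Eˣ := Units.mk0 (1 - ((a⁻¹ : Eˣ) : E)) (sub_ne_zero_of_ne (Ne.symm hainv)) with hydef
    have st1 : sym a * sym x = 0 := steinberg a ha
    have st2 : sym a⁻¹ * sym y = 0 := steinberg a⁻¹ hainv
    have hsa : sym a = -(form a * sym a⁻¹) := by rw [inv_key, neg_neg]
    have hay : sym a * sym y = 0 := by
      rw [hsa, neg_mul, mul_assoc, st2, mul_zero, neg_zero]
    have hxy : x = (-a) * y := by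
      apply Units.ext
      simp only [hxdef, hydef, Units.val_mk0, Units.val_mul, Units.val_neg,
        Units.val_inv_eq_inv_val]
      field_simp
      ring
    have hneg : (-a) = x * y⁻¹ := by rw [hxy, mul_inv_cancel_right]
    have hayinv : sym a * sym y⁻¹ = 0 := by
      refine form_cancel y ?_
      rw [mul_zero, ← form_move, inv_key, mul_neg, hay, neg_zero]
    have h3 : sym a * (eta * sym x * sym y⁻¹) = 0 := by
      rw [← mul_assoc, eta_move, st1, mul_zero, zero_mul]
    rw [hneg, mul_symbol, mul_add, mul_add, st1, hayinv, h3, add_zero, add_zero]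

lemma sym_neg (c : Eˣ) : sym (-c) = sym (-1 : Eˣ) + form (-1 : Eˣ) * sym c := by
  have h := mul_symbol (-1 : Eˣ) c
  rw [neg_one_mul] at h
  rw [h]
  show _ = sym (-1 : Eˣ) + (1 + eta * sym (-1 : Eˣ)) * sym c
  noncomm_ring

lemma neg_sym_mul (c : Eˣ) : sym (-c) * sym c = (0 : KMW E) := by
  have h := sym_mul_neg (-c)
  rwa [neg_neg] at h

lemma sym_mul_neg_one (c : Eˣ) :
    sym c * sym (-1 : Eˣ) = -(form (-1 : Eˣ) * (sym c * sym c)) := by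
  have h := sym_mul_neg c
  rw [sym_neg c, mul_add, form_move] at h
  exact eq_neg_of_add_eq_zero_left h

lemma sym_mul' (u v : Eˣ) : sym (u * v) = sym u + form u * sym v := by
  rw [mul_symbol, form, add_mul, one_mul, add_assoc]

lemma form_neg_absorb (a : Eˣ) :
    form a * (form (-1 : Eˣ) * (sym a * sym a)) = sym a * sym a := by
  rw [← mul_assoc, ← form_mul, mul_neg_one, form, add_mul, one_mul,
    mul_assoc eta (sym (-a)) (sym a * sym a), ← mul_assoc (sym (-a)) (sym a) (sym a),
    neg_sym_mul, zero_mul, mul_zero, add_zero]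

lemma key (a b : Eˣ) :
    form (-a) * (sym a * sym b) = -(form a * (sym b * sym a)) := by
  have h0 : (sym a + form a * sym b) * (sym a + form a * sym (-b)) = 0 := by
    rw [← sym_mul', ← sym_mul', mul_neg]; exact sym_mul_neg (a * b)
  have hexp : (sym a + form a * sym b) * (sym a + form a * sym (-b))
      = sym a * sym a + form a * (sym a * sym (-b)) + form a * (sym b * sym a)
        + form a * (form a * (sym b * sym (-b))) := by
    calc (sym a + form a * sym b) * (sym a + form a * sym (-b))
        = sym a * sym a + sym a * (form a * sym (-b)) + ((form a * sym b) * sym a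
          + (form a * sym b) * (form a * sym (-b))) := by noncomm_ring
      _ = _ := by
          rw [form_move, mul_assoc (form a) (sym b) (sym a),
            mul_assoc (form a) (sym b) (form a * sym (-b)), form_move a (sym b) (sym (-b))]
          abel
  rw [hexp, sym_mul_neg b, mul_zero, mul_zero, add_zero] at h0
  have hASb : sym a * sym (-b)
      = -(form (-1 : Eˣ) * (sym a * sym a)) + form (-1 : Eˣ) * (sym a * sym b) := by
    rw [sym_neg b, mul_add, sym_mul_neg_one a, form_move]
  rw [hASb, mul_add, mul_neg, form_neg_absorb] at h0
  -- h0 : sym a * sym a + (-(sym a * sym a) + form a * (form (-1) * (sym a * sym b)))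
  --        + form a * (sym b * sym a) = 0
  have h1 : form a * (form (-1 : Eˣ) * (sym a * sym b)) + form a * (sym b * sym a) = 0 := by
    calc form a * (form (-1 : Eˣ) * (sym a * sym b)) + form a * (sym b * sym a)
        = sym a * sym a + (-(sym a * sym a) + form a * (form (-1 : Eˣ) * (sym a * sym b)))
          + form a * (sym b * sym a) := by abel
      _ = 0 := h0
  rw [← mul_assoc, ← form_mul, mul_neg_one] at h1
  exact eq_neg_of_add_eq_zero_left h1

lemma eps_def : (eps : KMW E) = -form (-1 : Eˣ) := rfl

end KMW

/-- In `K^MW_*(E)`, `[a][b] = ε·[b][a]` where `ε = −⟨−1⟩ = −(1 + η[−1])`: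
degree-1 symbols ε-commute. -/
theorem kmw_eps_comm (E : Type) [Field E] (a b : Eˣ) :
    KMW.sym a * KMW.sym b = KMW.eps * (KMW.sym b * KMW.sym a) := by
  have hFF : KMW.form (-1 : Eˣ) * KMW.form (-1 : Eˣ) = (1 : KMW E) := by
    rw [← KMW.form_mul, neg_mul_neg, one_mul, KMW.form_one]
  have hfa : KMW.form (-a) = KMW.form a * KMW.form (-1 : Eˣ) := by
    rw [← KMW.form_mul, mul_neg_one]
  refine KMW.form_cancel (-a) ?_
  rw [KMW.key a b]
  calc -(KMW.form a * (KMW.sym b * KMW.sym a))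
      = -(KMW.form a * ((KMW.form (-1 : Eˣ) * KMW.form (-1 : Eˣ)) * (KMW.sym b * KMW.sym a))) := by
        rw [hFF, one_mul]
    _ = KMW.form (-a) * (KMW.eps * (KMW.sym b * KMW.sym a)) := by
        rw [hfa, KMW.eps_def, neg_mul, mul_neg, mul_assoc, mul_assoc]
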